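/- Let C be a β-avoiding simplicial complex with no ghost vertices whose 1-skeleton is the disjoint union of two complete graphs on nonempty vertex sets M and N (that is, the 2-element faces of C are exactly the pairs of distinct vertices lying both in M or both in N). Then C is the disjoint union of the full simplex on M and the full simplex on N, i.e. the faces of C are exactly the subsets of M together with the subsets of N. -/

import Mathlib

open Finset

/-- A (finite) simplicial complex on ground set `V`: a collection of finite subsets of `V`
closed under taking subsets.  (The empty collection, the void complex, is allowed.) -/
structure SComplex (V : Type) where
  faces : Finset (Finset V)
  down_closed : ∀ s ∈ faces, ∀ t ⊆ s, t ∈ faces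

/-- An integer matrix, viewed over `ℚ`, has a rank. -/
noncomputable def intRank {m n : Type} [Fintype n] (A : Matrix m n ℤ) : ℕ :=
  (A.map ((↑·) : ℤ → ℚ)).rank

/-- An integer matrix `A` of rank `d` is unimodular if there is a nonzero `λ` such that
every `d × d` minor of `A` equals `0`, `λ` or `-λ`. -/
def IntUnimodular {m n : Type} [Fintype m] [Fintype n] (A : Matrix m n ℤ) : Prop :=
  ∃ lam : ℤ, lam ≠ 0 ∧ ∀ (r : Fin (intRank A) → m) (c : Fin (intRank A) → n),
    (A.submatrix r c).det = 0 ∨ (A.submatrix r c).det = lam ∨ (A.submatrix r c).det = -lam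

/-- A real matrix `A` of rank `d` is unimodular if there is a nonzero `λ` such that
every `d × d` minor of `A` equals `0`, `λ` or `-λ`. -/
def RealUnimodular {m n : Type} [Fintype m] [Fintype n] (A : Matrix m n ℝ) : Prop :=
  ∃ lam : ℝ, lam ≠ 0 ∧ ∀ (r : Fin A.rank → m) (c : Fin A.rank → n),
    (A.submatrix r c).det = 0 ∨ (A.submatrix r c).det = lam ∨ (A.submatrix r c).det = -lam

namespace SComplex

variable {V W : Type}

/-- The facets of a simplicial complex: its inclusion-maximal faces. -/
def facets [DecidableEq V] (C : SComplex V) : Finset (Finset V) :=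
  C.faces.filter fun F => ∀ G ∈ C.faces, F ⊆ G → F = G

/-- The design matrix `A_{C,d}` of the hierarchical model given by the complex `C` and
the table dimension vector `d`.  Columns are indexed by tuples `i ∈ ∏ v, [d v]`, rows by
pairs `(F, j)` with `F` a facet and `j ∈ ∏_{v ∈ F} [d v]`; the entry is `1` iff the
restriction of `i` to `F` is `j`. -/
def designMatrixD [DecidableEq V] (C : SComplex V) (d : V → ℕ) :
    Matrix ((F : {F // F ∈ C.facets}) × ((v : {v // v ∈ F.1}) → Fin (d v.1)))
      ((v : V) → Fin (d v)) ℤ :=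
  fun r i => if ∀ v : {v // v ∈ r.1.1}, i v.1 = r.2 v then 1 else 0

/-- The binary design matrix `A_C = A_{C,2}`. -/
def designMatrix [DecidableEq V] (C : SComplex V) := designMatrixD C fun _ => 2

/-- A simplicial complex is unimodular if its binary design matrix is unimodular. -/
def IsUnimodular [DecidableEq V] [Fintype V] (C : SComplex V) : Prop :=
  IntUnimodular (designMatrix C)

/-- The Alexander dual `C* = {S : Sᶜ ∉ C}`. -/
def dual [DecidableEq V] [Fintype V] (C : SComplex V) : SComplex V where
  faces := univ.filter fun s => sᶜ ∉ C.faces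
  down_closed := by
    intro s hs t ht
    simp only [mem_filter, mem_univ, true_and] at hs ⊢
    intro h
    exact hs (C.down_closed _ h _ (compl_subset_compl.mpr ht))

/-- The induced subcomplex of `C` on a vertex subset `A`. -/
def induce [DecidableEq V] (C : SComplex V) (A : Finset V) :
    SComplex {v // v ∈ A} where
  faces := univ.filter fun s => s.map (Function.Embedding.subtype fun v => v ∈ A) ∈ C.faces
  down_closed := by
    intro s hs t ht
    simp only [mem_filter, mem_univ, true_and] at hs ⊢
    exact C.down_closed _ hs _ (map_subset_map.mpr ht)

/-- The link of a set `S` in `C`, as a complex on the ground set `Sᶜ`: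
`link_S(C) = {F \ S : F ∈ C, S ⊆ F}`. -/
def link [DecidableEq V] [Fintype V] (C : SComplex V) (S : Finset V) :
    SComplex {v // v ∈ Sᶜ} where
  faces := univ.filter fun s =>
    s.map (Function.Embedding.subtype fun v => v ∈ Sᶜ) ∪ S ∈ C.faces
  down_closed := by
    intro s hs t ht
    simp only [mem_filter, mem_univ, true_and] at hs ⊢
    exact C.down_closed _ hs _ (union_subset_union_left (map_subset_map.mpr ht))

/-- The minor `link_R(C \ S)` of `C`, a complex on the ground set `(R ∪ S)ᶜ`. -/
def minorAt [DecidableEq V] [Fintype V] (C : SComplex V) (R S : Finset V) :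
    SComplex {v // v ∈ (R ∪ S)ᶜ} where
  faces := univ.filter fun s =>
    s.map (Function.Embedding.subtype fun v => v ∈ (R ∪ S)ᶜ) ∪ R ∈ C.faces
  down_closed := by
    intro s hs t ht
    simp only [mem_filter, mem_univ, true_and] at hs ⊢
    exact C.down_closed _ hs _ (union_subset_union_left (map_subset_map.mpr ht))

/-- Isomorphism of simplicial complexes: a bijection of ground sets carrying faces to faces. -/
def Isomorphic [DecidableEq W] (C : SComplex V) (D : SComplex W) : Prop :=
  ∃ e : V ≃ W, ∀ s : Finset V, s ∈ C.faces ↔ s.image (⇑e) ∈ D.faces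

/-- `D` is a minor of `C` if `D` is isomorphic to `link_R(C \ S)` for some face `R` of `C`
and vertex set `S` disjoint from `R`. -/
def IsMinor [DecidableEq V] [Fintype V] [DecidableEq W] (D : SComplex W) (C : SComplex V) :
    Prop :=
  ∃ R S : Finset V, Disjoint R S ∧ R ∈ C.faces ∧ D.Isomorphic (C.minorAt R S)

/-- The simplicial complex generated by a given collection of sets. -/
def gen [DecidableEq V] [Fintype V] (gens : Finset (Finset V)) : SComplex V where
  faces := univ.filter fun s => ∃ g ∈ gens, s ⊆ g
  down_closed := by
    intro s hs t ht
    simp only [mem_filter, mem_univ, true_and] at hs ⊢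
    obtain ⟨g, hg, hsg⟩ := hs
    exact ⟨g, hg, ht.trans hsg⟩

/-- The cone over `C`: one new vertex (the last one) is added to every face. -/
def cone {n : ℕ} (C : SComplex (Fin n)) : SComplex (Fin (n + 1)) where
  faces := univ.filter fun s => (univ.filter fun v : Fin n => v.castSucc ∈ s) ∈ C.faces
  down_closed := by
    intro s hs t ht
    simp only [mem_filter, mem_univ, true_and] at hs ⊢
    refine C.down_closed _ hs _ ?_
    intro v hv
    simp only [mem_filter, mem_univ, true_and] at hv ⊢
    exact ht hv

/-- Adding one ghost vertex (the last one) to `C`. -/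
def ghost {n : ℕ} (C : SComplex (Fin n)) : SComplex (Fin (n + 1)) where
  faces := univ.filter fun s => Fin.last n ∉ s ∧
    (univ.filter fun v : Fin n => v.castSucc ∈ s) ∈ C.faces
  down_closed := by
    intro s hs t ht
    simp only [mem_filter, mem_univ, true_and] at hs ⊢
    refine ⟨fun h => hs.1 (ht h), C.down_closed _ hs.2 _ ?_⟩
    intro v hv
    simp only [mem_filter, mem_univ, true_and] at hv ⊢
    exact ht hv

/-- The iterated cone `cone^p(C)`. -/
def conePow {n : ℕ} : (p : ℕ) → SComplex (Fin n) → SComplex (Fin (n + p))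
  | 0, C => C
  | p + 1, C => cone (conePow p C)

/-- Adding `p` ghost vertices `G^p(C)`. -/
def ghostPow {n : ℕ} : (p : ℕ) → SComplex (Fin n) → SComplex (Fin (n + p))
  | 0, C => C
  | p + 1, C => ghost (ghostPow p C)

/-- The embedding `Fin n ↪ Fin (n+1)` by `castSucc`. -/
def castSuccEmb' {n : ℕ} : Fin n ↪ Fin (n + 1) :=
  ⟨Fin.castSucc, Fin.castSucc_injective n⟩

/-- The Lawrence lifting `Λ(C)`: its facets are the old ground set `[n]` (a big facet)
together with `F ∪ {n+1}` for each facet `F` of `C`. -/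
def lawrence {n : ℕ} (C : SComplex (Fin n)) : SComplex (Fin (n + 1)) :=
  gen (insert ((univ : Finset (Fin n)).map castSuccEmb')
    (C.facets.image fun F => insert (Fin.last n) (F.map castSuccEmb')))

/-- The disjoint union `Δ_m ⊔ Δ_k` of an `m`-simplex (on the first `m+1` vertices) and
a `k`-simplex (on the remaining `k+1` vertices). -/
def disjSimplices (m k : ℕ) : SComplex (Fin (m + k + 2)) :=
  gen {univ.filter fun x : Fin (m + k + 2) => (x : ℕ) ≤ m,
    univ.filter fun x : Fin (m + k + 2) => m < (x : ℕ)}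

/-- The full simplex on `k` vertices (i.e. `Δ_{k-1}`; for `k = 0` this is `Δ_{-1} = {∅}`). -/
def fullSimplexC (k : ℕ) : SComplex (Fin k) where
  faces := univ
  down_closed := fun _ _ t _ => mem_univ t

/-- The void complex `Δ_{-2} = {}`. -/
def voidC : SComplex (Fin 0) where
  faces := ∅
  down_closed := by simp

/-- `∂Δ_k ⊔ {v}`: the boundary of a `k`-simplex together with one extra disjoint vertex. -/
def bdyDisjPt (k : ℕ) : SComplex (Fin (k + 2)) where
  faces := univ.filter fun s =>
    s ⊂ (univ.filter fun x : Fin (k + 2) => (x : ℕ) < k + 1) ∨ s = {Fin.last (k + 1)}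
  down_closed := by
    intro s hs t ht
    simp only [mem_filter, mem_univ, true_and] at hs ⊢
    rcases hs with hs | rfl
    · exact Or.inl (lt_of_le_of_lt ht hs)
    · rcases Finset.subset_singleton_iff.mp ht with rfl | rfl
      · refine Or.inl (Finset.empty_ssubset.mpr ⟨⟨0, by omega⟩, ?_⟩)
        simp
      · exact Or.inr rfl

/-- The path `P_4` on four vertices. -/
def P4 : SComplex (Fin 4) := gen {{0, 1}, {1, 2}, {2, 3}}

/-- The four-cycle `C_4`. -/
def C4 : SComplex (Fin 4) := gen {{0, 1}, {1, 2}, {2, 3}, {0, 3}}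

/-- The boundary of the octahedron, with antipodal vertex pairs `(0,3)`, `(1,4)`, `(2,5)`. -/
def O6 : SComplex (Fin 6) :=
  gen {{0, 1, 2}, {0, 1, 5}, {0, 4, 2}, {0, 4, 5}, {3, 1, 2}, {3, 1, 5}, {3, 4, 2}, {3, 4, 5}}

/-- The complex `J_1` on five vertices with facets `12, 15, 234, 345`. -/
def J1 : SComplex (Fin 5) := gen {{0, 1}, {0, 4}, {1, 2, 3}, {2, 3, 4}}

/-- The complex `J_2` on five vertices with facets `12, 235, 34, 145`. -/
def J2 : SComplex (Fin 5) := gen {{0, 1}, {1, 2, 4}, {2, 3}, {0, 3, 4}}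

/-- The nuclear complexes (on `Fin` ground sets), built from disjoint unions of two
simplices, duals thereof, and simplices, by repeatedly coning, adding ghost vertices
and taking Lawrence liftings. -/
inductive Nuclear : {n : ℕ} → SComplex (Fin n) → Prop
  | lawrence {n : ℕ} {D : SComplex (Fin n)} : Nuclear D → Nuclear D.lawrence
  | ghost {n : ℕ} {D : SComplex (Fin n)} : Nuclear D → Nuclear D.ghost
  | coneDisj (p m k : ℕ) : Nuclear (conePow p (disjSimplices m k))
  | coneDualDisj (p m k : ℕ) : Nuclear (conePow p (dual (disjSimplices (m + 1) (k + 1))))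
  | simplex (k : ℕ) : Nuclear (fullSimplexC k)
  | void : Nuclear voidC

/-- A complex on an arbitrary ground set is nuclear if it is isomorphic to a nuclear
complex on a `Fin` ground set. -/
def IsNuclear (C : SComplex V) : Prop :=
  ∃ (k : ℕ) (D : SComplex (Fin k)), Nuclear D ∧ C.Isomorphic D

/-- `C` is β-avoiding if no minor of `C` is isomorphic to `P_4`, `O_6`, `O_6*`, `J_1`,
`J_1*`, `J_2`, or `∂Δ_k ⊔ {v}` for some `k ≥ 1`. -/
def BetaAvoiding [DecidableEq V] [Fintype V] (C : SComplex V) : Prop :=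
  ¬ IsMinor P4 C ∧ ¬ IsMinor O6 C ∧ ¬ IsMinor (dual O6) C ∧
  ¬ IsMinor J1 C ∧ ¬ IsMinor (dual J1) C ∧ ¬ IsMinor J2 C ∧
  ∀ k : ℕ, 1 ≤ k → ¬ IsMinor (bdyDisjPt k) C

/-- The 1-skeleton of a complex, as a simple graph. -/
def oneSkeleton [DecidableEq V] (C : SComplex V) : SimpleGraph V where
  Adj u v := u ≠ v ∧ ({u, v} : Finset V) ∈ C.faces
  symm := by
    refine ⟨?_⟩
    intro u v h
    exact ⟨h.1.symm, by rw [Finset.pair_comm]; exact h.2⟩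
  loopless := by
    refine ⟨?_⟩
    intro u h
    exact h.1 rfl

/-- The non-ghost vertices of `C`: those `v` with `{v}` a face. -/
def nonGhost [DecidableEq V] [Fintype V] (C : SComplex V) : Finset V :=
  univ.filter fun v => ({v} : Finset V) ∈ C.faces

/-- `S` is a minimal nonface of `C`: not a face, but all proper subsets are faces. -/
def MinNonface (C : SComplex V) (S : Finset V) : Prop :=
  S ∉ C.faces ∧ ∀ t ⊂ S, t ∈ C.faces

end SComplex

section AuxProof

open SComplex

lemma betaAux_subsets_are_faces {V : Type} [DecidableEq V] [Fintype V]
    (C : SComplex V)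
    (hbd : ∀ k : ℕ, 1 ≤ k → ¬ SComplex.IsMinor (SComplex.bdyDisjPt k) C)
    (hng : ∀ v : V, ({v} : Finset V) ∈ C.faces)
    (M N : Finset V) (hN : N.Nonempty) (hMN : Disjoint M N)
    (hskel : ∀ u v : V, u ≠ v →
      (({u, v} : Finset V) ∈ C.faces ↔
        (({u, v} : Finset V) ⊆ M ∨ ({u, v} : Finset V) ⊆ N))) :
    ∀ s : Finset V, s ⊆ M → s ∈ C.faces := by
  obtain ⟨w0, hw0N⟩ := hN
  have hempty : (∅ : Finset V) ∈ C.faces := C.down_closed _ (hng w0) _ (empty_subset _)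
  have hedge : ∀ u v : V, u ≠ v → ({u, v} : Finset V) ⊆ M → ({u, v} : Finset V) ∈ C.faces := by
    intro u v huv hsub
    exact (hskel u v huv).mpr (Or.inl hsub)
  by_contra hcon
  push_neg at hcon
  obtain ⟨s0, hs0M, hs0⟩ := hcon
  -- minimal bad set
  set Bad : Finset (Finset V) := univ.filter (fun s => s ⊆ M ∧ s ∉ C.faces) with hBad
  have hBadne : Bad.Nonempty := ⟨s0, by simp [hBad, hs0M, hs0]⟩
  obtain ⟨T, hTBad, hTmin⟩ := Finset.exists_min_image Bad Finset.card hBadne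
  simp only [hBad, mem_filter, mem_univ, true_and] at hTBad
  obtain ⟨hTM, hTnf⟩ := hTBad
  have hmin : ∀ t ⊂ T, t ∈ C.faces := by
    intro t ht
    by_contra htn
    have h1 : t ∈ Bad := by simp [hBad, htn, ht.subset.trans hTM]
    have h2 := hTmin t h1
    have h3 := Finset.card_lt_card ht
    omega
  -- T has at least 3 elements
  have hT3 : 3 ≤ T.card := by
    by_contra h
    interval_cases hc : T.card
    · rw [Finset.card_eq_zero] at hc; exact hTnf (hc ▸ hempty)
    · obtain ⟨v, rfl⟩ := Finset.card_eq_one.mp hc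
      exact hTnf (hng v)
    · obtain ⟨u, v, huv, rfl⟩ := Finset.card_eq_two.mp hc
      exact hTnf (hedge u v huv hTM)
  obtain ⟨k, hk1, hkcard⟩ : ∃ k, 1 ≤ k ∧ T.card = k + 1 := ⟨T.card - 1, by omega, by omega⟩
  have hwT : w0 ∉ T := fun h => (Finset.disjoint_left.mp hMN (hTM h)) hw0N
  -- the ground set of the minor
  set X : Finset V := (T ∪ {w0})ᶜ with hX
  have hGmem : ∀ v : V, v ∈ ((∅ : Finset V) ∪ X)ᶜ ↔ (v ∈ T ∨ v = w0) := by
    intro v; simp [hX]; tauto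
  -- the enumeration of T
  have hcast : k + 1 = T.card := hkcard.symm
  set g : Fin (k+1) → V := fun i => (T.equivFin.symm (finCongr hcast i) : V) with hg
  have hgT : ∀ i, g i ∈ T := fun i => (T.equivFin.symm (finCongr hcast i)).2
  have hginj : Function.Injective g := by
    intro i j h
    have h1 := T.equivFin.symm.injective (Subtype.ext h)
    exact (finCongr hcast).injective h1
  have hgsurj : ∀ x ∈ T, ∃ i, g i = x := by
    intro x hx
    refine ⟨(finCongr hcast).symm (T.equivFin ⟨x, hx⟩), ?_⟩
    simp [hg]
  set f : Fin (k+2) → V := fun i => if h : (i : ℕ) < k + 1 then g ⟨i, h⟩ else w0 with hf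
  have hfval : ∀ (i : Fin (k+2)) (h : (i : ℕ) < k + 1), f i = g ⟨i, h⟩ := by
    intro i h; simp only [hf]; exact dif_pos h
  have hflast : f (Fin.last (k+1)) = w0 := by simp [hf]
  have hfinj : Function.Injective f := by
    intro i j h
    by_cases hi : (i : ℕ) < k + 1 <;> by_cases hj : (j : ℕ) < k + 1
    · rw [hfval i hi, hfval j hj] at h
      have h1 := hginj h
      have h2 := congrArg Fin.val h1
      simp only [] at h2
      exact Fin.ext h2
    · rw [hfval i hi] at h
      simp only [hf, dif_neg hj] at h
      exact absurd (h ▸ hgT ⟨i, hi⟩) hwT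
    · rw [hfval j hj] at h
      simp only [hf, dif_neg hi] at h
      exact absurd (h.symm ▸ hgT ⟨j, hj⟩) hwT
    · have h1 : (i : ℕ) = k + 1 := by have := i.isLt; omega
      have h2 : (j : ℕ) = k + 1 := by have := j.isLt; omega
      exact Fin.ext (h1.trans h2.symm)
  have hfmem : ∀ i, f i ∈ ((∅ : Finset V) ∪ X)ᶜ := by
    intro i
    rw [hGmem]
    by_cases h : (i : ℕ) < k + 1
    · exact Or.inl (hfval i h ▸ hgT ⟨i, h⟩)
    · have h1 : f i = w0 := by simp only [hf]; exact dif_neg h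
      exact Or.inr h1
  set eS : Fin (k+2) → {v // v ∈ ((∅ : Finset V) ∪ X)ᶜ} := fun i => ⟨f i, hfmem i⟩ with heS
  have heSinj : Function.Injective eS := by
    intro i j h
    exact hfinj (congrArg Subtype.val h)
  have hGcard : (((∅ : Finset V) ∪ X)ᶜ).card = k + 2 := by
    have hset : ((∅ : Finset V) ∪ X)ᶜ = T ∪ {w0} := by
      ext v; rw [hGmem]; simp; tauto
    rw [hset, Finset.card_union_of_disjoint (by simpa using hwT)]
    simp [hkcard]
  have hbij : Function.Bijective eS := by
    rw [Fintype.bijective_iff_injective_and_card]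
    refine ⟨heSinj, ?_⟩
    rw [Fintype.card_coe, hGcard, Fintype.card_fin]
  set e : Fin (k+2) ≃ {v // v ∈ ((∅ : Finset V) ∪ X)ᶜ} := Equiv.ofBijective eS hbij with he
  -- the image helper
  have himg : ∀ s : Finset (Fin (k+2)),
      (s.image e).map (Function.Embedding.subtype _) = s.image f := by
    intro s
    rw [Finset.map_eq_image, Finset.image_image]
    rfl
  set B : Finset (Fin (k+2)) := univ.filter (fun x : Fin (k+2) => (x : ℕ) < k + 1) with hB
  have hBcard : B.card = k + 1 := by
    have hBc : B = ({Fin.last (k+1)} : Finset (Fin (k+2)))ᶜ := by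
      ext x
      simp only [hB, mem_filter, mem_univ, true_and, Finset.mem_compl, Finset.mem_singleton]
      constructor
      · intro h hx
        rw [hx] at h
        simp [Fin.last] at h
      · intro h
        have hx := x.isLt
        rcases Nat.lt_or_ge (x : ℕ) (k+1) with h1 | h1
        · exact h1
        · exact absurd (Fin.ext (by simp [Fin.last]; omega)) h
    rw [hBc, Finset.card_compl]
    simp
  have hBimg : B.image f = T := by
    apply Finset.eq_of_subset_of_card_le
    · intro x hx
      simp only [Finset.mem_image] at hx
      obtain ⟨i, hi, rfl⟩ := hx
      simp only [hB, mem_filter] at hi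
      exact hfval i hi.2 ▸ hgT ⟨i, hi.2⟩
    · rw [Finset.card_image_of_injective _ hfinj, hkcard, hBcard]
  -- membership characterizations
  have hDmem : ∀ s : Finset (Fin (k+2)),
      s ∈ (bdyDisjPt k).faces ↔ (s ⊂ B ∨ s = {Fin.last (k+1)}) := by
    intro s
    simp only [bdyDisjPt, mem_filter, mem_univ, true_and, hB]
  have hCmem : ∀ t : Finset {v // v ∈ ((∅ : Finset V) ∪ X)ᶜ},
      t ∈ (C.minorAt ∅ X).faces ↔ t.map (Function.Embedding.subtype _) ∈ C.faces := by
    intro t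
    simp [SComplex.minorAt]
  -- produce the forbidden minor
  refine hbd k hk1 ⟨∅, X, Finset.disjoint_empty_left _, hempty, ⟨e, ?_⟩⟩
  intro s
  rw [hDmem s, hCmem _, himg s]
  constructor
  · rintro (hsB | rfl)
    · have h1 : s.image f ⊂ B.image f := (Finset.image_ssubset_image hfinj).mpr hsB
      rw [hBimg] at h1
      exact hmin _ h1
    · rw [Finset.image_singleton, hflast]
      exact hng w0
  · intro hface
    by_cases hlast : Fin.last (k+1) ∈ s
    · right
      by_contra hne
      obtain ⟨i, his, hine⟩ : ∃ i ∈ s, i ≠ Fin.last (k+1) := by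
        by_contra h; push_neg at h
        exact hne (Finset.eq_singleton_iff_unique_mem.mpr ⟨hlast, h⟩)
      have hi : (i : ℕ) < k + 1 := by
        have h1 := i.isLt
        rcases Nat.lt_or_ge (i : ℕ) (k+1) with h2 | h2
        · exact h2
        · exact absurd (Fin.ext (by simp [Fin.last]; omega)) hine
      have hfiT : f i ∈ T := hfval i hi ▸ hgT ⟨i, hi⟩
      have hpair : ({f i, w0} : Finset V) ⊆ s.image f := by
        intro x hx
        simp only [Finset.mem_insert, Finset.mem_singleton] at hx
        rcases hx with rfl | rfl
        · exact Finset.mem_image_of_mem f his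
        · exact hflast ▸ Finset.mem_image_of_mem f hlast
      have hpf : ({f i, w0} : Finset V) ∈ C.faces := C.down_closed _ hface _ hpair
      have hne2 : f i ≠ w0 := fun h => hwT (h ▸ hfiT)
      rcases (hskel _ _ hne2).mp hpf with h | h
      · exact (Finset.disjoint_left.mp hMN (h (by simp))) hw0N
      · exact (Finset.disjoint_left.mp hMN (hTM hfiT)) (h (by simp))
    · left
      have hsB : s ⊆ B := by
        intro i hi
        simp only [hB, mem_filter, mem_univ, true_and]
        rcases Nat.lt_or_ge (i : ℕ) (k+1) with h | h
        · exact h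
        · have h1 : i = Fin.last (k+1) := Fin.ext (by simp [Fin.last]; have := i.isLt; omega)
          exact absurd (h1 ▸ hi) hlast
      refine lt_of_le_of_ne hsB ?_
      intro heq
      rw [heq, hBimg] at hface
      exact hTnf hface

end AuxProof

open SComplex in
/-- A β-avoiding complex without ghost vertices whose 1-skeleton is a disjoint union of
two complete graphs on nonempty vertex sets `M` and `N` is the disjoint union of the full
simplices on `M` and on `N`. -/
theorem betaAvoiding_disconnected_skeleton {V : Type} [DecidableEq V] [Fintype V]
    (C : SComplex V) (hC : BetaAvoiding C)
    (hng : ∀ v : V, ({v} : Finset V) ∈ C.faces)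
    (M N : Finset V) (hM : M.Nonempty) (hN : N.Nonempty) (hMN : Disjoint M N)
    (hcover : M ∪ N = Finset.univ)
    (hskel : ∀ u v : V, u ≠ v →
      (({u, v} : Finset V) ∈ C.faces ↔
        (({u, v} : Finset V) ⊆ M ∨ ({u, v} : Finset V) ⊆ N))) :
    ∀ s : Finset V, s ∈ C.faces ↔ (s ⊆ M ∨ s ⊆ N) := by
  have hbd := hC.2.2.2.2.2.2
  have hsubM := betaAux_subsets_are_faces C hbd hng M N hN hMN hskel
  have hsubN := betaAux_subsets_are_faces C hbd hng N M hM hMN.symm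
      (fun u v h => (hskel u v h).trans or_comm)
  intro s
  constructor
  · intro hs
    by_contra h
    push_neg at h
    obtain ⟨hM', hN'⟩ := h
    obtain ⟨u, hus, huM⟩ := Finset.not_subset.mp hM'
    obtain ⟨v, hvs, hvN⟩ := Finset.not_subset.mp hN'
    have huN : u ∈ N := by
      have h1 : u ∈ M ∪ N := hcover ▸ Finset.mem_univ u
      rcases Finset.mem_union.mp h1 with h2 | h2
      · exact absurd h2 huM
      · exact h2
    have hvM : v ∈ M := by
      have h1 : v ∈ M ∪ N := hcover ▸ Finset.mem_univ v
      rcases Finset.mem_union.mp h1 with h2 | h2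
      · exact h2
      · exact absurd h2 hvN
    have huv : u ≠ v := fun h => Finset.disjoint_left.mp hMN hvM (h ▸ huN)
    have hpair : ({u, v} : Finset V) ⊆ s := by
      intro x hx
      simp only [Finset.mem_insert, Finset.mem_singleton] at hx
      rcases hx with rfl | rfl
      exacts [hus, hvs]
    have hpf := C.down_closed _ hs _ hpair
    rcases (hskel u v huv).mp hpf with h | h
    · exact huM (h (by simp))
    · exact hvN (h (by simp))
  · rintro (h | h)
    · exact hsubM s h
    · exact hsubN s h
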